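/- Let α ≥ 1 be an integer, J ≥ 0 an integer, and let (d_j)_{j≥1} be nonnegative reals with D := ∑_{j≥1} d_j^λ < ∞ for some 0 < λ < 1. Then ∑_{v} (∏_{j∈v, j≤αJ} α!·d_j)^λ · (|v ∩ {j : j > αJ}|! · ∏_{j∈v, j>αJ} d_j)^λ ≤ exp((α!)^λ D) · ∑_{ℓ=0}^∞ (ℓ!)^{λ−1} D^ℓ, where the outer sum ranges over all finite subsets v of the positive integers, and the right-hand side is finite. -/

import Mathlib

open scoped BigOperators

private lemma binom_aux (S c : ℝ) (hS : 0 ≤ S) (hc : 0 ≤ c) :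
    ∀ m : ℕ, S ^ (m + 1) + (m + 1 : ℝ) * c * S ^ m ≤ (S + c) ^ (m + 1) := by
  intro m
  induction m with
  | zero => norm_num
  | succ n ih =>
    have h1 : (S + c) ^ (n + 1 + 1) = (S + c) * (S + c) ^ (n + 1) := by ring
    have h2 : (S + c) * (S ^ (n + 1) + (n + 1 : ℝ) * c * S ^ n) ≤
        (S + c) * (S + c) ^ (n + 1) :=
      mul_le_mul_of_nonneg_left ih (by linarith)
    have hSn : 0 ≤ S ^ n := pow_nonneg hS n
    have hSn1 : 0 ≤ S ^ (n + 1) := pow_nonneg hS (n + 1)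
    have h3 : (S + c) * (S ^ (n + 1) + ((n : ℝ) + 1) * c * S ^ n)
        = S ^ (n + 1 + 1) + ((n : ℝ) + 1 + 1) * c * S ^ (n + 1)
          + ((n : ℝ) + 1) * c ^ 2 * S ^ n := by ring
    have h4 : 0 ≤ ((n : ℝ) + 1) * c ^ 2 * S ^ n := by positivity
    push_cast
    linarith

private lemma esymm_bound (c : ℕ → ℝ) (hc : ∀ j, 0 ≤ c j) (s : Finset ℕ) :
    ∀ ℓ : ℕ, (ℓ.factorial : ℝ) * ∑ u ∈ s.powersetCard ℓ, ∏ j ∈ u, c j ≤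
      (∑ j ∈ s, c j) ^ ℓ := by
  classical
  induction s using Finset.induction_on with
  | empty =>
    intro ℓ
    cases ℓ with
    | zero => simp
    | succ n =>
      rw [Finset.powersetCard_eq_empty.2 (by simp)]
      simp
  | @insert a s ha ih =>
    intro ℓ
    cases ℓ with
    | zero => simp
    | succ m =>
      rw [Finset.powersetCard_succ_insert ha]
      have hdisj : Disjoint (Finset.powersetCard (m + 1) s)
          ((Finset.powersetCard m s).image (insert a)) := by
        rw [Finset.disjoint_left]
        intro u hu hu'
        rcases Finset.mem_image.1 hu' with ⟨t, _, rfl⟩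
        have : a ∈ insert a t := Finset.mem_insert_self a t
        have hsub := (Finset.mem_powersetCard.1 hu).1
        exact ha (hsub this)
      rw [Finset.sum_union hdisj]
      have hinj : Set.InjOn (insert a) (Finset.powersetCard m s : Set (Finset ℕ)) := by
        intro u hu u' hu' h
        have hau : a ∉ u := fun hmem => ha ((Finset.mem_powersetCard.1 (by simpa using hu)).1 hmem)
        have hau' : a ∉ u' := fun hmem =>
          ha ((Finset.mem_powersetCard.1 (by simpa using hu')).1 hmem)
        have := congrArg (Finset.erase · a) h
        simpa [Finset.erase_insert hau, Finset.erase_insert hau'] using this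
      rw [Finset.sum_image hinj]
      have himg : ∑ u ∈ Finset.powersetCard m s, ∏ j ∈ insert a u, c j =
          c a * ∑ u ∈ Finset.powersetCard m s, ∏ j ∈ u, c j := by
        rw [Finset.mul_sum]
        refine Finset.sum_congr rfl fun u hu => ?_
        have hau : a ∉ u := fun hmem => ha ((Finset.mem_powersetCard.1 hu).1 hmem)
        rw [Finset.prod_insert hau]
      rw [himg, Finset.sum_insert ha]
      set S := ∑ j ∈ s, c j with hSdef
      have hS0 : 0 ≤ S := Finset.sum_nonneg fun j _ => hc j
      have ih1 := ih (m + 1)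
      have ih2 := ih m
      have hE0 : 0 ≤ ∑ u ∈ Finset.powersetCard m s, ∏ j ∈ u, c j :=
        Finset.sum_nonneg fun u _ => Finset.prod_nonneg fun j _ => hc j
      have hfac : ((m + 1).factorial : ℝ) = (m + 1 : ℝ) * (m.factorial : ℝ) := by
        rw [Nat.factorial_succ]; push_cast; ring
      have key : ((m + 1).factorial : ℝ) *
          ((∑ u ∈ Finset.powersetCard (m + 1) s, ∏ j ∈ u, c j) +
            c a * ∑ u ∈ Finset.powersetCard m s, ∏ j ∈ u, c j) ≤
          S ^ (m + 1) + (m + 1 : ℝ) * c a * S ^ m := by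
        rw [mul_add]
        have t1 : ((m + 1).factorial : ℝ) *
            (∑ u ∈ Finset.powersetCard (m + 1) s, ∏ j ∈ u, c j) ≤ S ^ (m + 1) := ih1
        have t2 : ((m + 1).factorial : ℝ) *
            (c a * ∑ u ∈ Finset.powersetCard m s, ∏ j ∈ u, c j) ≤
            (m + 1 : ℝ) * c a * S ^ m := by
          rw [hfac]
          calc (m + 1 : ℝ) * (m.factorial : ℝ) *
              (c a * ∑ u ∈ Finset.powersetCard m s, ∏ j ∈ u, c j)
              = (m + 1 : ℝ) * c a *
                ((m.factorial : ℝ) * ∑ u ∈ Finset.powersetCard m s, ∏ j ∈ u, c j) := by ring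
            _ ≤ (m + 1 : ℝ) * c a * S ^ m := by
                refine mul_le_mul_of_nonneg_left ih2 ?_
                exact mul_nonneg (by positivity) (hc a)
        linarith
      refine key.trans ?_
      have := binom_aux S (c a) hS0 (hc a) m
      simpa [add_comm] using this

theorem stmt16 (α J : ℕ) (hα : 1 ≤ α) (d : ℕ → ℝ) (hd0 : ∀ j, 0 ≤ d j)
    (lam : ℝ) (hlam0 : 0 < lam) (hlam1 : lam < 1)
    (hD : Summable (fun j => d j ^ lam)) :
    (∑' v : Finset ℕ,
        (∏ j ∈ v.filter (fun j => j < α * J), ((α.factorial : ℝ) * d j)) ^ lam *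
          (((v.filter (fun j => α * J ≤ j)).card.factorial : ℝ) *
            ∏ j ∈ v.filter (fun j => α * J ≤ j), d j) ^ lam)
      ≤ Real.exp ((α.factorial : ℝ) ^ lam * ∑' j, d j ^ lam) *
          ∑' ℓ : ℕ, (ℓ.factorial : ℝ) ^ (lam - 1) * (∑' j, d j ^ lam) ^ ℓ ∧
    Summable (fun ℓ : ℕ => (ℓ.factorial : ℝ) ^ (lam - 1) * (∑' j, d j ^ lam) ^ ℓ) := by
  classical
  set c : ℕ → ℝ := fun j => d j ^ lam with hc_def
  have hc0 : ∀ j, 0 ≤ c j := fun j => Real.rpow_nonneg (hd0 j) lam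
  set D : ℝ := ∑' j, d j ^ lam with hDdef
  have hD0 : 0 ≤ D := tsum_nonneg fun j => hc0 j
  set b : ℕ → ℝ := fun ℓ => (ℓ.factorial : ℝ) ^ (lam - 1) * D ^ ℓ with hb_def
  have hb0 : ∀ ℓ, 0 ≤ b ℓ := by
    intro ℓ
    exact mul_nonneg (Real.rpow_nonneg (Nat.cast_nonneg _) _) (pow_nonneg hD0 ℓ)
  -- recursion for b
  have hbrec : ∀ n : ℕ, b (n + 1) = (((n : ℝ) + 1) ^ (lam - 1) * D) * b n := by
    intro n
    have hfac : ((n + 1).factorial : ℝ) = ((n : ℝ) + 1) * (n.factorial : ℝ) := by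
      rw [Nat.factorial_succ]; push_cast; ring
    have h1 : ((n + 1).factorial : ℝ) ^ (lam - 1) =
        ((n : ℝ) + 1) ^ (lam - 1) * (n.factorial : ℝ) ^ (lam - 1) := by
      rw [hfac, Real.mul_rpow (by positivity) (by positivity)]
    simp only [hb_def, h1, pow_succ]
    ring
  -- summability of b
  have hsum_b : Summable b := by
    refine summable_of_ratio_norm_eventually_le (r := 1 / 2) (by norm_num) ?_
    have htop : Filter.Tendsto (fun n : ℕ => ((n : ℝ) + 1)) Filter.atTop Filter.atTop :=
      Filter.tendsto_atTop_add_const_right _ 1 tendsto_natCast_atTop_atTop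
    have hrp : Filter.Tendsto (fun x : ℝ => x ^ (lam - 1)) Filter.atTop (nhds 0) := by
      have := tendsto_rpow_neg_atTop (y := 1 - lam) (by linarith)
      simpa [neg_sub] using this
    have htend : Filter.Tendsto (fun n : ℕ => ((n : ℝ) + 1) ^ (lam - 1) * D)
        Filter.atTop (nhds 0) := by
      simpa using (hrp.comp htop).mul_const D
    have hev : ∀ᶠ n : ℕ in Filter.atTop, ((n : ℝ) + 1) ^ (lam - 1) * D < 1 / 2 :=
      htend.eventually_lt_const (by norm_num)
    filter_upwards [hev] with n hn
    rw [Real.norm_of_nonneg (hb0 (n + 1)), Real.norm_of_nonneg (hb0 n), hbrec n]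
    exact mul_le_mul_of_nonneg_right hn.le (hb0 n)
  set A : ℝ := Real.exp ((α.factorial : ℝ) ^ lam * D) with hAdef
  set B : ℝ := ∑' ℓ, b ℓ with hBdef
  have hB0 : 0 ≤ B := tsum_nonneg hb0
  set p : ℕ → Prop := fun j => j < α * J with hp_def
  set q : ℕ → Prop := fun j => α * J ≤ j with hq_def
  set g : Finset ℕ → ℝ := fun w => (∏ j ∈ w, ((α.factorial : ℝ) * d j)) ^ lam with hg_def
  set h : Finset ℕ → ℝ := fun u => ((u.card.factorial : ℝ) * ∏ j ∈ u, d j) ^ lam with hh_def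
  set f : Finset ℕ → ℝ := fun v => g (v.filter p) * h (v.filter q) with hf_def
  have hg0 : ∀ w, 0 ≤ g w := fun w =>
    Real.rpow_nonneg (Finset.prod_nonneg fun j _ => mul_nonneg (by positivity) (hd0 j)) _
  have hh0 : ∀ u, 0 ≤ h u := fun u =>
    Real.rpow_nonneg (mul_nonneg (by positivity) (Finset.prod_nonneg fun j _ => hd0 j)) _
  have hf0 : ∀ v, 0 ≤ f v := fun v => mul_nonneg (hg0 _) (hh0 _)
  -- Step A : sums of g over subsets of range (α*J)
  have stepA : ∑ w ∈ (Finset.range (α * J)).powerset, g w ≤ A := by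
    have hterm : ∀ w ∈ (Finset.range (α * J)).powerset,
        g w = ∏ j ∈ w, ((α.factorial : ℝ) * d j) ^ lam := by
      intro w _
      rw [hg_def]
      exact (Real.finset_prod_rpow w _ (fun j _ => mul_nonneg (by positivity) (hd0 j)) lam).symm
    rw [Finset.sum_congr rfl hterm]
    have hprod : ∑ w ∈ (Finset.range (α * J)).powerset,
        ∏ j ∈ w, ((α.factorial : ℝ) * d j) ^ lam =
        ∏ j ∈ Finset.range (α * J), (((α.factorial : ℝ) * d j) ^ lam + 1) := by
      rw [Finset.prod_add]
      exact (Finset.sum_congr rfl fun w _ => by simp).symm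
    rw [hprod]
    have hbd1 : ∏ j ∈ Finset.range (α * J), (((α.factorial : ℝ) * d j) ^ lam + 1) ≤
        ∏ j ∈ Finset.range (α * J), Real.exp (((α.factorial : ℝ) * d j) ^ lam) := by
      refine Finset.prod_le_prod (fun j _ => ?_) (fun j _ => ?_)
      · have := Real.rpow_nonneg (mul_nonneg (α.factorial.cast_nonneg) (hd0 j)) lam
        linarith
      have := Real.add_one_le_exp (((α.factorial : ℝ) * d j) ^ lam)
      linarith
    refine hbd1.trans ?_
    rw [← Real.exp_sum]
    refine Real.exp_le_exp.2 ?_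
    have hsplit : ∀ j, ((α.factorial : ℝ) * d j) ^ lam = (α.factorial : ℝ) ^ lam * c j :=
      fun j => Real.mul_rpow (by positivity) (hd0 j)
    calc ∑ j ∈ Finset.range (α * J), ((α.factorial : ℝ) * d j) ^ lam
        = (α.factorial : ℝ) ^ lam * ∑ j ∈ Finset.range (α * J), c j := by
          rw [Finset.mul_sum]; exact Finset.sum_congr rfl fun j _ => hsplit j
      _ ≤ (α.factorial : ℝ) ^ lam * D := by
          refine mul_le_mul_of_nonneg_left ?_ (Real.rpow_nonneg (by positivity) _)
          exact Summable.sum_le_tsum _ (fun j _ => hc0 j) hD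
  -- Step B : sums of h over any finite collection of finsets
  have stepB : ∀ U : Finset (Finset ℕ), ∑ u ∈ U, h u ≤ B := by
    intro U
    set s : Finset ℕ := U.sup id with hs_def
    have hUsub : U ⊆ s.powerset := by
      intro u hu
      exact Finset.mem_powerset.2 (Finset.le_sup (f := id) hu)
    have h1 : ∑ u ∈ U, h u ≤ ∑ u ∈ s.powerset, h u :=
      Finset.sum_le_sum_of_subset_of_nonneg hUsub fun u _ _ => hh0 u
    refine h1.trans ?_
    rw [Finset.sum_powerset]
    have hinner : ∀ ℓ ∈ Finset.range (s.card + 1),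
        ∑ u ∈ s.powersetCard ℓ, h u ≤ b ℓ := by
      intro ℓ _
      have hterm : ∀ u ∈ s.powersetCard ℓ,
          h u = (ℓ.factorial : ℝ) ^ lam * ∏ j ∈ u, c j := by
        intro u hu
        have hcard : u.card = ℓ := (Finset.mem_powersetCard.1 hu).2
        rw [hh_def]
        simp only [hcard]
        rw [Real.mul_rpow (by positivity) (Finset.prod_nonneg fun j _ => hd0 j)]
        congr 1
        exact (Real.finset_prod_rpow u _ (fun j _ => hd0 j) lam).symm
      rw [Finset.sum_congr rfl hterm, ← Finset.mul_sum]
      have hes := esymm_bound c hc0 s ℓ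
      have hSle : ∑ j ∈ s, c j ≤ D := Summable.sum_le_tsum _ (fun j _ => hc0 j) hD
      have hS0 : 0 ≤ ∑ j ∈ s, c j := Finset.sum_nonneg fun j _ => hc0 j
      have hpow : (∑ j ∈ s, c j) ^ ℓ ≤ D ^ ℓ := pow_le_pow_left₀ hS0 hSle ℓ
      have hfacpos : (0 : ℝ) < (ℓ.factorial : ℝ) := by positivity
      have hX : ∑ u ∈ s.powersetCard ℓ, ∏ j ∈ u, c j ≤ D ^ ℓ / (ℓ.factorial : ℝ) := by
        rw [le_div_iff₀ hfacpos]
        calc (∑ u ∈ s.powersetCard ℓ, ∏ j ∈ u, c j) * (ℓ.factorial : ℝ)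
            = (ℓ.factorial : ℝ) * ∑ u ∈ s.powersetCard ℓ, ∏ j ∈ u, c j := by ring
          _ ≤ (∑ j ∈ s, c j) ^ ℓ := hes
          _ ≤ D ^ ℓ := hpow
      calc (ℓ.factorial : ℝ) ^ lam * ∑ u ∈ s.powersetCard ℓ, ∏ j ∈ u, c j
          ≤ (ℓ.factorial : ℝ) ^ lam * (D ^ ℓ / (ℓ.factorial : ℝ)) :=
            mul_le_mul_of_nonneg_left hX (Real.rpow_nonneg (by positivity) _)
        _ = b ℓ := by
            rw [hb_def]
            simp only []
            rw [Real.rpow_sub hfacpos, Real.rpow_one]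
            ring
    calc ∑ ℓ ∈ Finset.range (s.card + 1), ∑ u ∈ s.powersetCard ℓ, h u
        ≤ ∑ ℓ ∈ Finset.range (s.card + 1), b ℓ := Finset.sum_le_sum hinner
      _ ≤ B := Summable.sum_le_tsum _ (fun ℓ _ => hb0 ℓ) hsum_b
  -- global partial sum bound
  have hbound : ∀ V : Finset (Finset ℕ), ∑ v ∈ V, f v ≤ A * B := by
    intro V
    set m : Finset ℕ → Finset ℕ × Finset ℕ := fun v => (v.filter p, v.filter q) with hm_def
    have hrecover : ∀ v : Finset ℕ, v.filter p ∪ v.filter q = v := by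
      intro v
      ext j
      simp only [Finset.mem_union, Finset.mem_filter, hp_def, hq_def]
      constructor
      · rintro (⟨hj, _⟩ | ⟨hj, _⟩) <;> exact hj
      · intro hj
        rcases lt_or_ge j (α * J) with hlt | hle
        · exact Or.inl ⟨hj, hlt⟩
        · exact Or.inr ⟨hj, hle⟩
    have hinj : Set.InjOn m (V : Set (Finset ℕ)) := by
      intro v _ v' _ hvv
      have h1 : v.filter p = v'.filter p := congrArg Prod.fst hvv
      have h2 : v.filter q = v'.filter q := congrArg Prod.snd hvv
      rw [← hrecover v, ← hrecover v', h1, h2]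
    set G : Finset ℕ × Finset ℕ → ℝ := fun x => g x.1 * h x.2 with hG_def
    have hGf : ∀ v, f v = G (m v) := fun v => rfl
    have h1 : ∑ v ∈ V, f v = ∑ x ∈ V.image m, G x := by
      rw [Finset.sum_image (fun v hv v' hv' => hinj hv hv')]
    rw [h1]
    set W : Finset (Finset ℕ) := (Finset.range (α * J)).powerset with hW_def
    set U : Finset (Finset ℕ) := V.image (fun v => v.filter q) with hU_def
    have hsub : V.image m ⊆ W ×ˢ U := by
      intro x hx
      rcases Finset.mem_image.1 hx with ⟨v, hv, rfl⟩
      rw [Finset.mem_product]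
      constructor
      · refine Finset.mem_powerset.2 ?_
        intro j hj
        rcases Finset.mem_filter.1 hj with ⟨_, hjp⟩
        exact Finset.mem_range.2 hjp
      · exact Finset.mem_image.2 ⟨v, hv, rfl⟩
    have h2 : ∑ x ∈ V.image m, G x ≤ ∑ x ∈ W ×ˢ U, G x :=
      Finset.sum_le_sum_of_subset_of_nonneg hsub fun x _ _ => mul_nonneg (hg0 _) (hh0 _)
    have h3 : ∑ x ∈ W ×ˢ U, G x = (∑ w ∈ W, g w) * ∑ u ∈ U, h u := by
      rw [Finset.sum_product, ← Finset.sum_mul_sum]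
    have h4 : (∑ w ∈ W, g w) * (∑ u ∈ U, h u) ≤ A * B := by
      refine mul_le_mul stepA (stepB U) (Finset.sum_nonneg fun u _ => hh0 u) (le_of_lt ?_)
      exact Real.exp_pos _
    calc ∑ x ∈ V.image m, G x ≤ ∑ x ∈ W ×ˢ U, G x := h2
      _ = (∑ w ∈ W, g w) * ∑ u ∈ U, h u := h3
      _ ≤ A * B := h4
  have hfsum : Summable f := summable_of_sum_le hf0 hbound
  exact ⟨Summable.tsum_le_of_sum_le hfsum hbound, hsum_b⟩
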